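/- arXiv:2011.07012 — 3 statements merged into one kernel-verified Lean document; each statement's English description precedes it below -/
import Mathlib

section
/- For W, P, λ, N₀, l > 0 and 0 < ζ < 1, the value ε = W·log₂[1 + {√P(−π²λ + √(π⁴λ² − 16N₀W·log ζ))/(4N₀W·l²)}²] satisfies exp(−(l⁴/P)·N₀W·θ(ε) − (2λπ²l²√(θ(ε)))/(4·P^{1/2}·sin(π/2))) = ζ, where θ(ε) = 2^{ε/W} − 1. -/
open Real

theorem max_target_rate_closed_form (W P lam N₀ l ζ : ℝ)
    (hW : 0 < W) (hP : 0 < P) (hlam : 0 < lam) (hN₀ : 0 < N₀) (hl : 0 < l)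
    (hζ₀ : 0 < ζ) (hζ₁ : ζ < 1) :
    let ε : ℝ := W * Real.logb 2
      (1 + (Real.sqrt P * (-(π ^ 2 * lam)
        + Real.sqrt (π ^ 4 * lam ^ 2 - 16 * N₀ * W * Real.log ζ))
        / (4 * N₀ * W * l ^ 2)) ^ 2)
    let θ : ℝ := (2 : ℝ) ^ (ε / W) - 1
    Real.exp (-(l ^ 4 / P) * N₀ * W * θ
        - 2 * lam * π ^ 2 * l ^ 2 * Real.sqrt θ
          / (4 * P ^ ((1 : ℝ) / 2) * Real.sin (π / 2))) = ζ := by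
  intro ε θ
  have hπ : 0 < π := Real.pi_pos
  have hlogζ : Real.log ζ < 0 := Real.log_neg hζ₀ hζ₁
  have hs0 : (0:ℝ) ≤ π ^ 4 * lam ^ 2 - 16 * N₀ * W * Real.log ζ := by
    nlinarith [mul_pos hN₀ hW, sq_nonneg (π ^ 2 * lam)]
  set s := Real.sqrt (π ^ 4 * lam ^ 2 - 16 * N₀ * W * Real.log ζ) with hs_def
  have hs : s ^ 2 = π ^ 4 * lam ^ 2 - 16 * N₀ * W * Real.log ζ := Real.sq_sqrt hs0
  have hsnn : 0 ≤ s := Real.sqrt_nonneg _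
  have hsge : π ^ 2 * lam ≤ s := by
    nlinarith [mul_pos hN₀ hW, sq_nonneg (π ^ 2 * lam)]
  set A := Real.sqrt P * (-(π ^ 2 * lam) + s) / (4 * N₀ * W * l ^ 2) with hA_def
  have hA : 0 ≤ A := by
    apply div_nonneg
    · exact mul_nonneg (Real.sqrt_nonneg P) (by linarith)
    · positivity
  have hθ : θ = A ^ 2 := by
    show (2:ℝ) ^ (ε / W) - 1 = A ^ 2
    have hε : ε / W = Real.logb 2 (1 + A ^ 2) := by
      show W * Real.logb 2 (1 + A ^ 2) / W = _
      field_simp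
    rw [hε, Real.rpow_logb (by norm_num) (by norm_num) (by positivity)]
    ring
  have hsqθ : Real.sqrt θ = A := by
    rw [hθ, Real.sqrt_sq hA]
  have hsp : Real.sqrt P ^ 2 = P := Real.sq_sqrt hP.le
  have hsppos : 0 < Real.sqrt P := Real.sqrt_pos.mpr hP
  rw [← Real.exp_log hζ₀]
  congr 1
  rw [hsqθ, hθ, Real.sin_pi_div_two, ← Real.sqrt_eq_rpow, hA_def]
  field_simp
  linear_combination (-(s - π ^ 2 * lam) ^ 2) * hsp + (-P) * hs
end

section
/- If X₁, X₂ ~ Gamma(α, β) (independent) and T ~ Exp(ρ) is independent of both, with β > ρ > 0, then for v ≥ c ≥ 0, with w = v − c, P[X₁ + X₂ + T + c ≤ v] = (1/Γ(α))∫₀^w [γ(α, β(w−x)) − (β^α e^{−ρ(w−x)}/(β−ρ)^α)·γ(α, (β−ρ)(w−x))]·(β^α x^{α−1}e^{−βx}/Γ(α)) dx. -/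
open MeasureTheory ProbabilityTheory Real

/-- Lower incomplete gamma function `γ(a, x) = ∫₀ˣ t^(a-1) e^(-t) dt`. -/
noncomputable def lowerGamma (a x : ℝ) : ℝ :=
  ∫ t in (0 : ℝ)..x, t ^ (a - 1) * Real.exp (-t)

lemma aux_intInt {α : ℝ} (hα : 0 < α) (b s u : ℝ) (g : ℝ → ℝ) (hg : Continuous g) :
    IntervalIntegrable (fun y => y ^ (α - 1) * Real.exp (-(b * y)) * g (u - y)) volume 0 s := by
  have h1 : IntervalIntegrable (fun y : ℝ => y ^ (α - 1)) volume 0 s :=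
    intervalIntegral.intervalIntegrable_rpow' (by linarith)
  have h2 := h1.mul_continuousOn (g := fun y => Real.exp (-(b * y)) * g (u - y))
    (Continuous.continuousOn (by continuity))
  simpa [mul_assoc] using h2

lemma aux_subst {α b : ℝ} (hα : 0 < α) (hb : 0 < b) {s : ℝ} (hs : 0 ≤ s) :
    ∫ y in (0:ℝ)..s, y ^ (α - 1) * Real.exp (-(b * y)) = lowerGamma α (b * s) / b ^ α := by
  have key : b • ∫ y in (0:ℝ)..s, (fun t => t ^ (α - 1) * Real.exp (-t)) (b * y)
      = lowerGamma α (b * s) := by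
    rw [intervalIntegral.smul_integral_comp_mul_left (fun t => t ^ (α - 1) * Real.exp (-t)) b]
    simp [lowerGamma]
  have congr1 : ∫ y in (0:ℝ)..s, (fun t => t ^ (α - 1) * Real.exp (-t)) (b * y)
      = b ^ (α - 1) * ∫ y in (0:ℝ)..s, y ^ (α - 1) * Real.exp (-(b * y)) := by
    rw [← intervalIntegral.integral_const_mul]
    apply intervalIntegral.integral_congr
    intro y hy
    rw [Set.uIcc_of_le hs] at hy
    have hy0 : 0 ≤ y := hy.1
    simp only []
    rw [Real.mul_rpow hb.le hy0]
    ring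
  have hbα : b ^ α = b * b ^ (α - 1) := by
    rw [← Real.rpow_one_add' hb.le (by intro h; linarith [h] : (1:ℝ) + (α-1) ≠ 0)]
    ring_nf
  rw [congr1] at key
  have hbne : b ^ α ≠ 0 := (Real.rpow_pos_of_pos hb α).ne'
  rw [smul_eq_mul] at key
  field_simp [hbα]
  rw [hbα]; linarith [key]

lemma lowerGamma_continuous {α : ℝ} (hα : 0 < α) : Continuous (lowerGamma α) := by
  apply intervalIntegral.continuous_primitive
  intro a b
  exact (intervalIntegral.intervalIntegrable_rpow' (by linarith)).mul_continuousOn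
    (Continuous.continuousOn (by continuity))

lemma Hval {α β ρ : ℝ} (hα : 0 < α) (hρ : 0 < ρ) (hβρ : ρ < β) {s : ℝ} (hs : 0 ≤ s) :
    ∫ y in (0:ℝ)..s, gammaPDFReal α β y * (1 - Real.exp (-(ρ * (s - y))))
      = (1 / Real.Gamma α) * (lowerGamma α (β * s)
          - β ^ α * Real.exp (-ρ * s) / (β - ρ) ^ α * lowerGamma α ((β - ρ) * s)) := by
  have hβ : 0 < β := hρ.trans hβρ
  have hβρ' : 0 < β - ρ := by linarith
  have hΓ : 0 < Real.Gamma α := Real.Gamma_pos_of_pos hα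
  have hcongr : ∫ y in (0:ℝ)..s, gammaPDFReal α β y * (1 - Real.exp (-(ρ * (s - y))))
      = ∫ y in (0:ℝ)..s, (β ^ α / Real.Gamma α) * (y ^ (α - 1) * Real.exp (-(β * y)))
          - (β ^ α / Real.Gamma α * Real.exp (-ρ * s))
            * (y ^ (α - 1) * Real.exp (-((β - ρ) * y))) := by
    apply intervalIntegral.integral_congr
    intro y hy
    rw [Set.uIcc_of_le hs] at hy
    have hy0 : 0 ≤ y := hy.1
    have hexp : Real.exp (-(β * y)) * Real.exp (-(ρ * (s - y)))
        = Real.exp (-ρ * s) * Real.exp (-((β - ρ) * y)) := by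
      rw [← Real.exp_add, ← Real.exp_add]; ring_nf
    simp only [gammaPDFReal, if_pos hy0]
    linear_combination (-(β ^ α / Real.Gamma α * y ^ (α - 1))) * hexp
  have hI1 : IntervalIntegrable
      (fun y => (β ^ α / Real.Gamma α) * (y ^ (α - 1) * Real.exp (-(β * y)))) volume 0 s := by
    have := (aux_intInt hα β s 0 (fun _ => 1) continuous_const).const_mul (β ^ α / Real.Gamma α)
    simpa [mul_assoc] using this
  have hI2 : IntervalIntegrable
      (fun y => (β ^ α / Real.Gamma α * Real.exp (-ρ * s))
        * (y ^ (α - 1) * Real.exp (-((β - ρ) * y)))) volume 0 s := by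
    have := (aux_intInt hα (β - ρ) s 0 (fun _ => 1) continuous_const).const_mul
      (β ^ α / Real.Gamma α * Real.exp (-ρ * s))
    simpa [mul_assoc] using this
  rw [hcongr, intervalIntegral.integral_sub hI1 hI2,
    intervalIntegral.integral_const_mul, intervalIntegral.integral_const_mul,
    aux_subst hα hβ hs, aux_subst hα hβρ' hs]
  field_simp

lemma gamma_Iio_zero {α β : ℝ} : gammaMeasure α β (Set.Iio 0) = 0 := by
  rw [gammaMeasure, withDensity_apply _ measurableSet_Iio]
  exact lintegral_gammaPDF_of_nonpos le_rfl

lemma exp_Iic {ρ : ℝ} (hρ : 0 < ρ) (t : ℝ) :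
    expMeasure ρ (Set.Iic t) = ENNReal.ofReal (1 - Real.exp (-(ρ * t))) := by
  haveI := isProbabilityMeasure_expMeasure hρ
  rcases le_or_gt 0 t with ht | ht
  · have h1 : (expMeasure ρ (Set.Iic t)).toReal = 1 - Real.exp (-(ρ * t)) := by
      rw [← measureReal_def, ← cdf_eq_real]
      have := cdf_expMeasure_eq hρ t
      rw [if_pos ht] at this
      exact this
    rw [← ENNReal.ofReal_toReal (measure_ne_top _ _), h1]
  · have h0 : expMeasure ρ (Set.Iic t) = 0 := by
      apply measure_mono_null (Set.Iic_subset_Iio.mpr ht)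
      rw [expMeasure, gammaMeasure, withDensity_apply _ measurableSet_Iio]
      exact lintegral_exponentialPDF_of_nonpos le_rfl
    rw [h0, eq_comm, ENNReal.ofReal_eq_zero]
    nlinarith [Real.one_le_exp (by nlinarith : (0:ℝ) ≤ -(ρ * t))]

lemma ae_ne_real (a : ℝ) : ∀ᵐ x : ℝ, x ≠ a := by
  have : volume {x : ℝ | ¬ x ≠ a} = 0 := by simp
  exact ae_iff.mpr this

lemma conv_neg {α β ρ u : ℝ} (hρ : 0 < ρ) (hu : u < 0) :
    Measure.map (fun p : ℝ × ℝ => p.1 + p.2)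
      ((gammaMeasure α β).prod (expMeasure ρ)) (Set.Iic u) = 0 := by
  haveI := isProbabilityMeasure_expMeasure hρ
  rw [Measure.map_apply (show Measurable (fun p : ℝ × ℝ => p.1 + p.2) from measurable_fst.add measurable_snd) measurableSet_Iic]
  refine measure_mono_null (t := (Set.Iio 0 ×ˢ Set.univ) ∪ (Set.univ ×ˢ Set.Iio 0)) ?_ ?_
  · intro p hp
    simp only [Set.mem_preimage, Set.mem_Iic] at hp
    by_contra h
    simp only [Set.mem_union, Set.mem_prod, Set.mem_Iio, Set.mem_univ, and_true, true_and,
      not_or, not_lt] at h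
    linarith [h.1, h.2]
  · apply measure_union_null
    · rw [Measure.prod_prod, gamma_Iio_zero, zero_mul]
    · rw [Measure.prod_prod, expMeasure, gamma_Iio_zero, mul_zero]

lemma conv_nonneg {α β ρ u : ℝ} (hα : 0 < α) (hρ : 0 < ρ) (hβρ : ρ < β) (hu : 0 ≤ u) :
    Measure.map (fun p : ℝ × ℝ => p.1 + p.2)
      ((gammaMeasure α β).prod (expMeasure ρ)) (Set.Iic u)
      = ENNReal.ofReal (∫ y in (0:ℝ)..u,
          gammaPDFReal α β y * (1 - Real.exp (-(ρ * (u - y))))) := by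
  have hβ : 0 < β := hρ.trans hβρ
  haveI := isProbabilityMeasure_expMeasure hρ
  haveI := isProbabilityMeasure_gammaMeasure hα hβ
  rw [Measure.map_apply (show Measurable (fun p : ℝ × ℝ => p.1 + p.2) from measurable_fst.add measurable_snd) measurableSet_Iic,
    Measure.prod_apply ((show Measurable (fun p : ℝ × ℝ => p.1 + p.2) from measurable_fst.add measurable_snd) measurableSet_Iic)]
  have hsec : ∀ y : ℝ, (Prod.mk y ⁻¹' ((fun p : ℝ × ℝ => p.1 + p.2) ⁻¹' Set.Iic u))
      = Set.Iic (u - y) := by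
    intro y; ext t
    simp [Set.mem_preimage, Set.mem_Iic, le_sub_iff_add_le']
  simp_rw [hsec, exp_Iic hρ]
  have hpdf : Measurable (gammaPDF α β) := (measurable_gammaPDFReal α β).ennreal_ofReal
  rw [gammaMeasure, lintegral_withDensity_eq_lintegral_mul _ hpdf (Continuous.measurable (by continuity) |>.ennreal_ofReal)]
  simp only [Pi.mul_apply, gammaPDF]
  have hae : (fun y => (fun y => ENNReal.ofReal (gammaPDFReal α β y)) y
        * (fun y => ENNReal.ofReal (1 - Real.exp (-(ρ * (u - y))))) y)
      =ᵐ[volume] (Set.Ioc 0 u).indicator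
        (fun y => ENNReal.ofReal (gammaPDFReal α β y * (1 - Real.exp (-(ρ * (u - y)))))) := by
    filter_upwards [ae_ne_real 0] with y hy0
    rcases lt_or_gt_of_ne hy0 with hneg | hpos
    · rw [Set.indicator_of_notMem (by simp [Set.mem_Ioc]; intro h; linarith)]
      simp only [gammaPDFReal, if_neg (not_le.mpr hneg)]
      simp
    · rcases le_or_gt y u with hyu | hyu
      · rw [Set.indicator_of_mem (Set.mem_Ioc.mpr ⟨hpos, hyu⟩),
          ENNReal.ofReal_mul (gammaPDFReal_nonneg hα hβ y)]
      · rw [Set.indicator_of_notMem (by simp [Set.mem_Ioc]; intro h; linarith)]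
        have h1 : 1 - Real.exp (-(ρ * (u - y))) ≤ 0 := by
          nlinarith [Real.one_le_exp (by nlinarith : (0:ℝ) ≤ -(ρ * (u - y)))]
        simp [ENNReal.ofReal_eq_zero.mpr h1]
  rw [lintegral_congr_ae hae, lintegral_indicator measurableSet_Ioc _]
  have hnn : 0 ≤ᵐ[volume.restrict (Set.Ioc 0 u)]
      fun y => gammaPDFReal α β y * (1 - Real.exp (-(ρ * (u - y)))) := by
    refine (ae_restrict_iff' measurableSet_Ioc).mpr (ae_of_all _ fun y hy => ?_)
    refine mul_nonneg (gammaPDFReal_nonneg hα hβ y) ?_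
    have : Real.exp (-(ρ * (u - y))) ≤ 1 := by
      rw [Real.exp_le_one_iff]
      nlinarith [hy.2, hy.1]
    linarith
  have hint : IntegrableOn
      (fun y => gammaPDFReal α β y * (1 - Real.exp (-(ρ * (u - y))))) (Set.Ioc 0 u) volume := by
    have base := ((aux_intInt hα β u u (fun t => 1 - Real.exp (-(ρ * t)))
      (by continuity)).const_mul (β ^ α / Real.Gamma α))
    have hbase := (intervalIntegrable_iff_integrableOn_Ioc_of_le hu).mp base
    refine hbase.congr_fun (fun y hy => ?_) measurableSet_Ioc
    simp only [gammaPDFReal, if_pos (le_of_lt hy.1)]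
    ring
  rw [← MeasureTheory.ofReal_integral_eq_lintegral_ofReal hint hnn,
    intervalIntegral.integral_of_le hu]

lemma iIndepFun_ae_transfer {Ω : Type*} [MeasureSpace Ω] {f g : Fin 3 → Ω → ℝ}
    (hfg : ∀ i, f i =ᵐ[ℙ] g i)
    (h : iIndepFun f ℙ) :
    iIndepFun g ℙ := by
  rw [iIndepFun_iff_measure_inter_preimage_eq_mul] at h ⊢
  intro S sets hsets
  have hae : ∀ᵐ ω ∂ℙ, ∀ i, f i ω = g i ω := ae_all_iff.mpr hfg
  have h1 : ℙ (⋂ i ∈ S, g i ⁻¹' sets i) = ℙ (⋂ i ∈ S, f i ⁻¹' sets i) := by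
    apply measure_congr
    filter_upwards [hae] with ω hω
    show (ω ∈ ⋂ i ∈ S, g i ⁻¹' sets i) = (ω ∈ ⋂ i ∈ S, f i ⁻¹' sets i)
    simp only [eq_iff_iff, Set.mem_iInter, Set.mem_preimage]
    constructor
    · intro hmem j hj
      rw [hω j]; exact hmem j hj
    · intro hmem j hj
      rw [← hω j]; exact hmem j hj
  rw [h1, h S hsets]
  refine Finset.prod_congr rfl fun i _ => ?_
  apply measure_congr
  filter_upwards [hfg i] with ω hω
  show (f i ω ∈ sets i) = (g i ω ∈ sets i)
  rw [hω]

theorem paoi_cdf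
    {Ω : Type*} [MeasureSpace Ω] [IsProbabilityMeasure (ℙ : Measure Ω)]
    (X₁ X₂ T : Ω → ℝ) (ρ α β c v : ℝ) (hα : 0 < α) (hρ : 0 < ρ)
    (hβρ : ρ < β) (hc : 0 ≤ c) (hv : c ≤ v)
    (hX₁ : Measure.map X₁ ℙ = gammaMeasure α β)
    (hX₂ : Measure.map X₂ ℙ = gammaMeasure α β)
    (hT : Measure.map T ℙ = expMeasure ρ)
    (hInd : iIndepFun
      ![X₁, X₂, T] ℙ) :
    (ℙ {ω | X₁ ω + X₂ ω + T ω + c ≤ v}).toReal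
      = (1 / Real.Gamma α)
        * ∫ x in (0 : ℝ)..(v - c),
            (lowerGamma α (β * (v - c - x))
              - β ^ α * Real.exp (-ρ * (v - c - x)) / (β - ρ) ^ α
                * lowerGamma α ((β - ρ) * (v - c - x)))
            * (β ^ α * x ^ (α - 1) * Real.exp (-β * x) / Real.Gamma α) := by
  have hβ : 0 < β := hρ.trans hβρ
  have hΓ : 0 < Real.Gamma α := Real.Gamma_pos_of_pos hα
  haveI hPμ : IsProbabilityMeasure (gammaMeasure α β) := isProbabilityMeasure_gammaMeasure hα hβ
  haveI hPν : IsProbabilityMeasure (expMeasure ρ) := isProbabilityMeasure_expMeasure hρ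
  set w := v - c with hw
  have hw0 : 0 ≤ w := by simp only [hw]; linarith
  -- a.e. measurable versions
  have hm1 : AEMeasurable X₁ ℙ := aemeasurable_of_map_neZero (by rw [hX₁]; infer_instance)
  have hm2 : AEMeasurable X₂ ℙ := aemeasurable_of_map_neZero (by rw [hX₂]; infer_instance)
  have hm3 : AEMeasurable T ℙ := aemeasurable_of_map_neZero (by rw [hT]; infer_instance)
  set Y₁ := hm1.mk X₁ with hY₁def
  set Y₂ := hm2.mk X₂ with hY₂def
  set Y₃ := hm3.mk T with hY₃def
  have hY₁m : Measurable Y₁ := hm1.measurable_mk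
  have hY₂m : Measurable Y₂ := hm2.measurable_mk
  have hY₃m : Measurable Y₃ := hm3.measurable_mk
  have he₁ : X₁ =ᵐ[ℙ] Y₁ := hm1.ae_eq_mk
  have he₂ : X₂ =ᵐ[ℙ] Y₂ := hm2.ae_eq_mk
  have he₃ : T =ᵐ[ℙ] Y₃ := hm3.ae_eq_mk
  have hInd' : iIndepFun
      ![Y₁, Y₂, Y₃] ℙ := by
    refine iIndepFun_ae_transfer (f := ![X₁, X₂, T]) (fun i => ?_) hInd
    fin_cases i
    · simpa using he₁
    · simpa using he₂
    · simpa using he₃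
  have hmeas : ∀ i, Measurable (![Y₁, Y₂, Y₃] i) := by
    intro i; fin_cases i <;> simpa
  have hY₁d : Measure.map Y₁ ℙ = gammaMeasure α β := (Measure.map_congr he₁).symm.trans hX₁
  have hY₂d : Measure.map Y₂ ℙ = gammaMeasure α β := (Measure.map_congr he₂).symm.trans hX₂
  have hY₃d : Measure.map Y₃ ℙ = expMeasure ρ := (Measure.map_congr he₃).symm.trans hT
  have hi23 : IndepFun Y₂ Y₃ ℙ := by
    have := hInd'.indepFun (show (1 : Fin 3) ≠ 2 by decide)
    simpa using this
  have hi12 : IndepFun (fun ω => (Y₂ ω, Y₃ ω)) Y₁ ℙ := by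
    have := hInd'.indepFun_prodMk hmeas 1 2 0 (by decide) (by decide)
    simpa using this
  set S := fun ω => Y₂ ω + Y₃ ω with hSdef
  have hSm : Measurable S := hY₂m.add hY₃m
  have hiS : IndepFun Y₁ S ℙ :=
    (hi12.comp (measurable_fst.add measurable_snd) measurable_id).symm
  have hν2 : Measure.map (fun ω => (Y₂ ω, Y₃ ω)) ℙ
      = (gammaMeasure α β).prod (expMeasure ρ) := by
    rw [(indepFun_iff_map_prod_eq_prod_map_map hY₂m.aemeasurable hY₃m.aemeasurable).mp hi23,
      hY₂d, hY₃d]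
  set η := Measure.map (fun p : ℝ × ℝ => p.1 + p.2)
    ((gammaMeasure α β).prod (expMeasure ρ)) with hηdef
  have hη : Measure.map S ℙ = η := by
    rw [hηdef, ← hν2, Measure.map_map (show Measurable (fun p : ℝ × ℝ => p.1 + p.2) from measurable_fst.add measurable_snd)
      (hY₂m.prodMk hY₃m)]
    rfl
  haveI : IsProbabilityMeasure η := by
    rw [hηdef]
    exact Measure.isProbabilityMeasure_map (measurable_fst.add measurable_snd).aemeasurable
  have hjoint : Measure.map (fun ω => (Y₁ ω, S ω)) ℙ = (gammaMeasure α β).prod η := by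
    rw [(indepFun_iff_map_prod_eq_prod_map_map hY₁m.aemeasurable hSm.aemeasurable).mp hiS,
      hY₁d, hη]
  have hsetae : ℙ {ω | X₁ ω + X₂ ω + T ω + c ≤ v} = ℙ {ω | Y₁ ω + S ω ≤ w} := by
    apply measure_congr
    filter_upwards [he₁, he₂, he₃] with ω h1 h2 h3
    show (X₁ ω + X₂ ω + T ω + c ≤ v) = (Y₁ ω + S ω ≤ w)
    have hs : S ω = Y₂ ω + Y₃ ω := rfl
    rw [eq_iff_iff, hs, ← h1, ← h2, ← h3, hw]
    constructor <;> intro <;> linarith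
  have key : ℙ {ω | Y₁ ω + S ω ≤ w}
      = ∫⁻ x, η (Set.Iic (w - x)) ∂(gammaMeasure α β) := by
    have hset : {ω | Y₁ ω + S ω ≤ w}
        = (fun ω => (Y₁ ω, S ω)) ⁻¹' {p : ℝ × ℝ | p.1 + p.2 ≤ w} := rfl
    have happ := Measure.map_apply (μ := ℙ) (hY₁m.prodMk hSm)
      (s := {p : ℝ × ℝ | p.1 + p.2 ≤ w})
      ((measurable_fst.add measurable_snd) measurableSet_Iic)
    rw [hset, ← happ, hjoint,
      Measure.prod_apply (show MeasurableSet {p : ℝ × ℝ | p.1 + p.2 ≤ w} from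
        (measurable_fst.add measurable_snd) measurableSet_Iic)]
    congr 1
    funext x
    congr 1
    ext t
    simp [le_sub_iff_add_le']
  rw [hsetae, key]
  have hpdf : Measurable (gammaPDF α β) := (measurable_gammaPDFReal α β).ennreal_ofReal
  have hmono : Measurable fun x : ℝ => η (Set.Iic (w - x)) := by
    have h1 : Monotone fun t : ℝ => η (Set.Iic t) :=
      fun a b hab => measure_mono (Set.Iic_subset_Iic.mpr hab)
    exact h1.measurable.comp (measurable_const.sub measurable_id)
  rw [gammaMeasure, lintegral_withDensity_eq_lintegral_mul _ hpdf hmono]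
  simp only [Pi.mul_apply, gammaPDF]
  set g : ℝ → ℝ := fun x => gammaPDFReal α β x * ((1 / Real.Gamma α)
    * (lowerGamma α (β * (w - x))
      - β ^ α * Real.exp (-ρ * (w - x)) / (β - ρ) ^ α
        * lowerGamma α ((β - ρ) * (w - x)))) with hgdef
  have hae2 : (fun x => ENNReal.ofReal (gammaPDFReal α β x) * η (Set.Iic (w - x)))
      =ᵐ[volume] (Set.Ioc 0 w).indicator (fun x => ENNReal.ofReal (g x)) := by
    filter_upwards [ae_ne_real 0, ae_ne_real w] with x hx0 hxw
    rcases lt_or_gt_of_ne hx0 with hneg | hpos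
    · rw [Set.indicator_of_notMem (by
        simp only [Set.mem_Ioc, not_and_or, not_lt]
        exact Or.inl hneg.le)]
      have h0 : gammaPDFReal α β x = 0 := by
        simp [gammaPDFReal, if_neg (not_le.mpr hneg)]
      rw [h0]
      simp
    · rcases lt_or_gt_of_ne hxw with hlt | hgt
      · have hwx : 0 ≤ w - x := by linarith
        rw [Set.indicator_of_mem (Set.mem_Ioc.mpr ⟨hpos, hlt.le⟩), hηdef,
          conv_nonneg hα hρ hβρ hwx, Hval hα hρ hβρ hwx,
          ← ENNReal.ofReal_mul (gammaPDFReal_nonneg hα hβ x)]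
      · rw [Set.indicator_of_notMem (by
          simp only [Set.mem_Ioc, not_and_or, not_lt]
          exact Or.inr (not_le.mpr hgt))]
        rw [hηdef, conv_neg hρ (by linarith : w - x < 0), mul_zero]
  rw [lintegral_congr_ae hae2, lintegral_indicator measurableSet_Ioc]
  have hLG : Continuous (lowerGamma α) := lowerGamma_continuous hα
  have c2 : Continuous fun x : ℝ => (1 / Real.Gamma α)
      * (lowerGamma α (β * (w - x))
        - β ^ α * Real.exp (-ρ * (w - x)) / (β - ρ) ^ α
          * lowerGamma α ((β - ρ) * (w - x))) := by
    have cwx : Continuous fun x : ℝ => w - x := continuous_const.sub continuous_id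
    apply continuous_const.mul
    refine Continuous.sub (hLG.comp (continuous_const.mul cwx)) ?_
    exact ((continuous_const.mul
      (Real.continuous_exp.comp (continuous_const.mul cwx))).div_const _).mul
      (hLG.comp (continuous_const.mul cwx))
  have hgmeas : Measurable g := (measurable_gammaPDFReal α β).mul c2.measurable
  have hnn : 0 ≤ᵐ[volume.restrict (Set.Ioc 0 w)] g := by
    refine (ae_restrict_iff' measurableSet_Ioc).mpr (ae_of_all _ fun x hx => ?_)
    have hwx : 0 ≤ w - x := by linarith [hx.2]
    refine mul_nonneg (gammaPDFReal_nonneg hα hβ x) ?_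
    rw [← Hval hα hρ hβρ hwx]
    refine intervalIntegral.integral_nonneg hwx fun y hy => ?_
    refine mul_nonneg (gammaPDFReal_nonneg hα hβ y) ?_
    have : Real.exp (-(ρ * (w - x - y))) ≤ 1 := by
      rw [Real.exp_le_one_iff]
      nlinarith [hy.2, hy.1]
    linarith
  rw [← MeasureTheory.integral_eq_lintegral_of_nonneg_ae hnn
    hgmeas.aestronglyMeasurable.restrict,
    ← intervalIntegral.integral_of_le hw0, ← intervalIntegral.integral_const_mul]
  apply intervalIntegral.integral_congr
  intro x hx
  rw [Set.uIcc_of_le hw0] at hx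
  show g x = _
  rw [hgdef]
  simp only [gammaPDFReal, if_pos hx.1]
  have hne : Real.exp (-β * x) = Real.exp (-(β * x)) := by ring_nf
  rw [hne]
  ring
end

section
/- If X ~ Gamma(α, β) and T ~ Exp(ρ) with β > ρ, independent, then for w ≥ 0, P[X + T ≤ w] = (1/Γ(α))·[γ(α, βw) − (β^α e^{−ρw}/(β−ρ)^α)·γ(α, (β−ρ)w)]. -/
open MeasureTheory ProbabilityTheory Real

lemma key_int {α c w : ℝ} (hα : 0 < α) (hc : 0 < c) (hw : 0 ≤ w) :
    IntegrableOn (fun x : ℝ => x ^ (α - 1) * Real.exp (-(c * x))) (Set.Ioc 0 w) := by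
  have hrpow : IntegrableOn (fun x : ℝ => x ^ (α - 1)) (Set.Ioc 0 w) := by
    have := intervalIntegral.intervalIntegrable_rpow' (a := 0) (b := w)
      (r := α - 1) (by linarith)
    exact (intervalIntegrable_iff_integrableOn_Ioc_of_le hw).mp this
  refine hrpow.mono' ?_ ?_
  · have hm : Measurable (fun x : ℝ => x ^ (α - 1) * Real.exp (-(c * x))) := by
      apply measurable_of_continuousOn_compl_singleton (0:ℝ)
      apply ContinuousOn.mul
      · intro x hx
        exact (continuousAt_id.rpow_const (Or.inl hx)).continuousWithinAt
      · exact (((continuous_const.mul continuous_id).neg).rexp).continuousOn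
    exact hm.aestronglyMeasurable
  · filter_upwards [ae_restrict_mem measurableSet_Ioc] with x hx
    have hx0 : 0 < x := hx.1
    have hex : Real.exp (-(c * x)) ≤ 1 := by
      apply Real.exp_le_one_iff.mpr; nlinarith
    have h1 : 0 ≤ x ^ (α - 1) := Real.rpow_nonneg hx0.le _
    rw [Real.norm_eq_abs, abs_mul, abs_of_nonneg h1, abs_of_pos (Real.exp_pos _)]
    calc x ^ (α - 1) * Real.exp (-(c * x)) ≤ x ^ (α - 1) * 1 := by
          exact mul_le_mul_of_nonneg_left hex h1
      _ = x ^ (α - 1) := mul_one _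

lemma key_eq {α c w : ℝ} (hα : 0 < α) (hc : 0 < c) (hw : 0 ≤ w) :
    ∫ x in (0:ℝ)..w, x ^ (α - 1) * Real.exp (-(c * x))
      = c ^ (-α) * lowerGamma α (c * w) := by
  have h1 : ∀ x ∈ Set.uIcc (0:ℝ) w,
      x ^ (α - 1) * Real.exp (-(c * x))
        = c ^ (-(α - 1)) * ((c * x) ^ (α - 1) * Real.exp (-(c * x))) := by
    intro x hx
    rw [Set.uIcc_of_le hw] at hx
    rw [Real.mul_rpow hc.le hx.1, ← mul_assoc, ← mul_assoc, ← Real.rpow_add hc,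
      neg_add_cancel, Real.rpow_zero, one_mul]
  rw [intervalIntegral.integral_congr h1, intervalIntegral.integral_const_mul]
  have h2 := intervalIntegral.integral_comp_mul_left
    (a := 0) (b := w) (fun t => t ^ (α - 1) * Real.exp (-t)) hc.ne'
  simp only [mul_zero] at h2
  rw [h2]
  rw [smul_eq_mul, ← mul_assoc, lowerGamma]
  congr 1
  rw [← Real.rpow_neg_one c, ← Real.rpow_add hc]
  ring_nf

theorem gamma_plus_exp_cdf
    {Ω : Type*} [MeasureSpace Ω] [IsProbabilityMeasure (ℙ : Measure Ω)]
    (X T : Ω → ℝ) (ρ α β w : ℝ) (hα : 0 < α) (hρ : 0 < ρ) (hβρ : ρ < β)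
    (hw : 0 ≤ w)
    (hX : Measure.map X ℙ = gammaMeasure α β)
    (hT : Measure.map T ℙ = expMeasure ρ)
    (hInd : IndepFun X T ℙ) :
    (ℙ {ω | X ω + T ω ≤ w}).toReal
      = (1 / Real.Gamma α)
        * (lowerGamma α (β * w)
          - β ^ α * Real.exp (-ρ * w) / (β - ρ) ^ α
            * lowerGamma α ((β - ρ) * w)) := by
  have hβ : 0 < β := hρ.trans hβρ
  have hG : IsProbabilityMeasure (gammaMeasure α β) := isProbabilityMeasure_gammaMeasure hα hβ
  have hE : IsProbabilityMeasure (expMeasure ρ) := isProbabilityMeasure_expMeasure hρ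
  -- AEMeasurability
  have hXm : AEMeasurable X ℙ := by
    by_contra h
    rw [Measure.map_of_not_aemeasurable h] at hX
    have := hG.measure_univ
    rw [← hX] at this
    simp at this
  have hTm : AEMeasurable T ℙ := by
    by_contra h
    rw [Measure.map_of_not_aemeasurable h] at hT
    have := hE.measure_univ
    rw [← hT] at this
    simp at this
  have hset : MeasurableSet {p : ℝ × ℝ | p.1 + p.2 ≤ w} :=
    measurableSet_le (measurable_fst.add measurable_snd) measurable_const
  have hmapprod : Measure.map (fun ω => (X ω, T ω)) ℙ = (gammaMeasure α β).prod (expMeasure ρ) := by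
    rw [← hX, ← hT]
    exact (ProbabilityTheory.indepFun_iff_map_prod_eq_prod_map_map hXm hTm).mp hInd
  have step1 : ℙ {ω | X ω + T ω ≤ w}
      = ((gammaMeasure α β).prod (expMeasure ρ)) {p : ℝ × ℝ | p.1 + p.2 ≤ w} := by
    rw [← hmapprod, Measure.map_apply_of_aemeasurable (hXm.prodMk hTm) hset]
    rfl
  -- inner exponential measure of sections
  have hexpIic : ∀ y : ℝ, expMeasure ρ (Set.Iic y)
      = ENNReal.ofReal (if 0 ≤ y then 1 - Real.exp (-(ρ * y)) else 0) := by
    intro y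
    rw [expMeasure, gammaMeasure, withDensity_apply _ measurableSet_Iic,
      ← lintegral_exponentialPDF_eq_antiDeriv hρ y]
    rfl
  have step2 : ((gammaMeasure α β).prod (expMeasure ρ)) {p : ℝ × ℝ | p.1 + p.2 ≤ w}
      = ∫⁻ x, ENNReal.ofReal
          (if 0 ≤ w - x then 1 - Real.exp (-(ρ * (w - x))) else 0) ∂(gammaMeasure α β) := by
    rw [Measure.prod_apply hset]
    refine lintegral_congr fun x => ?_
    have : (Prod.mk x ⁻¹' {p : ℝ × ℝ | p.1 + p.2 ≤ w}) = Set.Iic (w - x) := by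
      ext t; simp [Set.mem_Iic]; constructor <;> intro h <;> linarith
    rw [this, hexpIic]
  -- rewrite via withDensity
  set g : ℝ → ℝ := fun x => if 0 ≤ w - x then 1 - Real.exp (-(ρ * (w - x))) else 0 with hg
  have hgm : Measurable g := by
    apply Measurable.ite
    · exact measurableSet_le measurable_const (measurable_const.sub measurable_id)
    · exact measurable_const.sub ((measurable_const.mul
        (measurable_const.sub measurable_id)).neg.exp)
    · exact measurable_const
  have step3 : (∫⁻ x, ENNReal.ofReal (g x) ∂(gammaMeasure α β))
      = ∫⁻ x, gammaPDF α β x * ENNReal.ofReal (g x) := by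
    have hpdfm : Measurable (gammaPDF α β) := (measurable_gammaPDFReal α β).ennreal_ofReal
    rw [gammaMeasure, lintegral_withDensity_eq_lintegral_mul _ hpdfm hgm.ennreal_ofReal]
    rfl
  -- restrict to Ioc 0 w
  set h : ℝ → ℝ := fun x => gammaPDFReal α β x * (1 - Real.exp (-(ρ * (w - x)))) with hh
  have step4 : (∫⁻ x, gammaPDF α β x * ENNReal.ofReal (g x))
      = ∫⁻ x in Set.Ioc 0 w, ENNReal.ofReal (h x) := by
    rw [← lintegral_indicator measurableSet_Ioc]
    refine lintegral_congr_ae ?_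
    have h0 : ∀ᵐ x : ℝ, x ≠ 0 := by
      rw [ae_iff]
      simpa using Real.volume_singleton (x := 0)
    filter_upwards [h0] with x hx0
    rcases lt_trichotomy x 0 with hlt | heq | hgt
    · rw [gammaPDF_of_neg hlt, zero_mul,
        Set.indicator_of_notMem (by simp [Set.mem_Ioc]; intro h'; linarith)]
    · exact absurd heq hx0
    · by_cases hxw : x ≤ w
      · rw [Set.indicator_of_mem (Set.mem_Ioc.mpr ⟨hgt, hxw⟩) fun x => ENNReal.ofReal (h x),
          show gammaPDF α β x = ENNReal.ofReal (gammaPDFReal α β x) from rfl,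
          ← ENNReal.ofReal_mul (gammaPDFReal_nonneg hα hβ x)]
        congr 1
        rw [hg, hh]
        simp only [if_pos (by linarith : (0:ℝ) ≤ w - x)]
      · push_neg at hxw
        rw [hg]
        simp only [if_neg (by linarith : ¬ (0:ℝ) ≤ w - x), ENNReal.ofReal_zero, mul_zero]
        rw [Set.indicator_of_notMem (by simp [Set.mem_Ioc]; intro h'; linarith)]
  -- integrability of h on Ioc 0 w
  have hβρ' : (0:ℝ) < β - ρ := by linarith
  have hint1 : IntegrableOn (fun x : ℝ => x ^ (α - 1) * Real.exp (-(β * x)))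
      (Set.Ioc 0 w) := key_int hα hβ hw
  have hint2 : IntegrableOn (fun x : ℝ => x ^ (α - 1) * Real.exp (-((β - ρ) * x)))
      (Set.Ioc 0 w) := key_int hα hβρ' hw
  set C : ℝ := β ^ α / Real.Gamma α with hC
  have hΓ : 0 < Real.Gamma α := Real.Gamma_pos_of_pos hα
  have hCpos : 0 < C := div_pos (Real.rpow_pos_of_pos hβ _) hΓ
  -- h equals explicit expression on Ioc
  have hcong : ∀ x ∈ Set.Ioc (0:ℝ) w,
      h x = C * (x ^ (α - 1) * Real.exp (-(β * x))
        - Real.exp (-(ρ * w)) * (x ^ (α - 1) * Real.exp (-((β - ρ) * x)))) := by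
    intro x hx
    rw [hh]
    simp only
    rw [gammaPDFReal, if_pos hx.1.le]
    rw [show -(ρ * (w - x)) = -(ρ * w) + ρ * x by ring, Real.exp_add]
    rw [show -((β - ρ) * x) = -(β * x) + ρ * x by ring, Real.exp_add]
    ring
  have hintsub : IntegrableOn (fun x : ℝ => x ^ (α - 1) * Real.exp (-(β * x))
      - Real.exp (-(ρ * w)) * (x ^ (α - 1) * Real.exp (-((β - ρ) * x))))
      (Set.Ioc 0 w) := hint1.sub (hint2.const_mul _)
  have hinth : IntegrableOn h (Set.Ioc 0 w) := by
    refine (IntegrableOn.congr_fun ((hintsub.const_mul C)) ?_ measurableSet_Ioc)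
    intro x hx; exact (hcong x hx).symm
  have hhnn : 0 ≤ᵐ[volume.restrict (Set.Ioc 0 w)] h := by
    filter_upwards [ae_restrict_mem measurableSet_Ioc] with x hx
    rw [hh]
    apply mul_nonneg (gammaPDFReal_nonneg hα hβ x)
    have : Real.exp (-(ρ * (w - x))) ≤ 1 := by
      apply Real.exp_le_one_iff.mpr
      have := hx.2; nlinarith [hx.1]
    linarith
  have step5 : (∫⁻ x in Set.Ioc 0 w, ENNReal.ofReal (h x))
      = ENNReal.ofReal (∫ x in Set.Ioc 0 w, h x) :=
    (MeasureTheory.ofReal_integral_eq_lintegral_ofReal hinth hhnn).symm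
  -- compute the real integral
  have hval : (∫ x in Set.Ioc 0 w, h x)
      = C * (β ^ (-α) * lowerGamma α (β * w)
          - Real.exp (-(ρ * w)) * ((β - ρ) ^ (-α) * lowerGamma α ((β - ρ) * w))) := by
    rw [setIntegral_congr_fun measurableSet_Ioc hcong]
    rw [integral_const_mul]
    congr 1
    rw [integral_sub hint1 (hint2.const_mul _), integral_const_mul]
    rw [← intervalIntegral.integral_of_le hw, ← intervalIntegral.integral_of_le hw]
    rw [key_eq hα hβ hw, key_eq hα hβρ' hw]
  -- put everything together
  rw [step1, step2, step3, step4, step5,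
    ENNReal.toReal_ofReal (integral_nonneg_of_ae hhnn), hval]
  have hb1 : (β : ℝ) ^ α ≠ 0 := (Real.rpow_pos_of_pos hβ α).ne'
  have hb2 : ((β - ρ) : ℝ) ^ α ≠ 0 := (Real.rpow_pos_of_pos hβρ' α).ne'
  rw [hC, Real.rpow_neg hβ.le, Real.rpow_neg hβρ'.le, neg_mul]
  field_simp
end
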